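/- At any vertex (φ_θ)_{θ∈Θ} of the polytope P (defined as in the previous statement), there is at most one state θ' ∈ Θ for which φ_{θ'} is not a 0–1 vector, and for that θ' at most two coordinates φ_{θ'}(S₁), φ_{θ'}(S₂) lie strictly in (0,1), with φ_{θ'}(S₁) + φ_{θ'}(S₂) = 1. -/

import Mathlib

open Finset

section Aux

variable {Θ I : Type*} [Fintype Θ] [Fintype I]

private lemma perturb
    (μ : Θ → ℝ) (r : Θ → I → ℝ) (C : ℝ)
    (P : Set (Θ → I → ℝ))
    (hP : P = {φ | (∀ θ S, 0 ≤ φ θ S) ∧ (∀ θ, ∑ S, φ θ S = 1) ∧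
      C ≤ ∑ θ, ∑ S, μ θ * φ θ S * r θ S})
    (φ : Θ → I → ℝ) (hvertex : φ ∈ Set.extremePoints ℝ P)
    (d : Θ → I → ℝ)
    (hrow : ∀ θ, ∑ S, d θ S = 0)
    (hsupp : ∀ θ S, d θ S ≠ 0 → φ θ S ∈ Set.Ioo (0:ℝ) 1)
    (hL : ∑ θ, ∑ S, μ θ * d θ S * r θ S = 0) :
    ∀ θ S, d θ S = 0 := by
  classical
  by_contra hd
  push_neg at hd
  obtain ⟨θ0, S0, hd0⟩ := hd
  have hφP := hvertex.1
  rw [hP] at hφP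
  obtain ⟨hnn, hsum, hCC⟩ := hφP
  have hne : (univ : Finset (Θ × I)).Nonempty := ⟨(θ0, S0), mem_univ _⟩
  set f : Θ × I → ℝ := fun p => if d p.1 p.2 = 0 then 1 else φ p.1 p.2 / |d p.1 p.2| with hf
  set ε := univ.inf' hne f with hε
  have hεpos : 0 < ε := by
    rw [hε, Finset.lt_inf'_iff]
    intro p _
    by_cases h : d p.1 p.2 = 0
    · simp [hf, h]
    · have hfr := hsupp p.1 p.2 h
      simp only [hf, h, if_false]
      exact div_pos hfr.1 (abs_pos.mpr h)
  have hbound : ∀ θ S, ε * |d θ S| ≤ φ θ S := by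
    intro θ S
    by_cases h : d θ S = 0
    · simp [h, hnn θ S]
    · have h1 : ε ≤ f (θ, S) := Finset.inf'_le f (mem_univ _)
      have h2 : f (θ, S) = φ θ S / |d θ S| := by simp [hf, h]
      rw [h2] at h1
      have habs : 0 < |d θ S| := abs_pos.mpr h
      calc ε * |d θ S| ≤ (φ θ S / |d θ S|) * |d θ S| :=
            mul_le_mul_of_nonneg_right h1 habs.le
        _ = φ θ S := div_mul_cancel₀ _ habs.ne'
  have hmem : ∀ (c : ℝ), |c| ≤ ε → (fun θ S => φ θ S + c * d θ S) ∈ P := by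
    intro c hc
    rw [hP]
    refine ⟨?_, ?_, ?_⟩
    · intro θ S
      show (0:ℝ) ≤ φ θ S + c * d θ S
      have habs : |c * d θ S| ≤ φ θ S := by
        rw [abs_mul]
        calc |c| * |d θ S| ≤ ε * |d θ S| :=
              mul_le_mul_of_nonneg_right hc (abs_nonneg _)
          _ ≤ φ θ S := hbound θ S
      linarith [neg_abs_le (c * d θ S)]
    · intro θ
      rw [Finset.sum_add_distrib, hsum θ, ← Finset.mul_sum, hrow θ]
      ring
    · have key : ∑ θ, ∑ S, μ θ * (φ θ S + c * d θ S) * r θ S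
          = (∑ θ, ∑ S, μ θ * φ θ S * r θ S) + c * ∑ θ, ∑ S, μ θ * d θ S * r θ S := by
        rw [Finset.mul_sum, ← Finset.sum_add_distrib]
        refine Finset.sum_congr rfl fun θ _ => ?_
        rw [Finset.mul_sum, ← Finset.sum_add_distrib]
        refine Finset.sum_congr rfl fun S _ => ?_
        ring
      rw [key, hL]
      simpa using hCC
  have hx1 := hmem (-ε) (by rw [abs_neg, abs_of_pos hεpos])
  have hx2 := hmem ε (by rw [abs_of_pos hεpos])
  have hseg : φ ∈ openSegment ℝ (fun θ S => φ θ S + (-ε) * d θ S)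
      (fun θ S => φ θ S + ε * d θ S) := by
    refine ⟨1/2, 1/2, by norm_num, by norm_num, by norm_num, ?_⟩
    funext θ S
    simp only [Pi.add_apply, Pi.smul_apply, smul_eq_mul]
    ring
  obtain ⟨_, h2⟩ := (mem_extremePoints.mp hvertex).2 _ hx1 _ hx2 hseg
  have heq := congrFun (congrFun h2 θ0) S0
  have hz : ε * d θ0 S0 = 0 := by linarith
  rcases mul_eq_zero.mp hz with h | h
  · exact absurd h hεpos.ne'
  · exact hd0 h

private lemma no_two_dirs
    (μ : Θ → ℝ) (r : Θ → I → ℝ) (C : ℝ)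
    (P : Set (Θ → I → ℝ))
    (hP : P = {φ | (∀ θ S, 0 ≤ φ θ S) ∧ (∀ θ, ∑ S, φ θ S = 1) ∧
      C ≤ ∑ θ, ∑ S, μ θ * φ θ S * r θ S})
    (φ : Θ → I → ℝ) (hvertex : φ ∈ Set.extremePoints ℝ P)
    (d1 d2 : Θ → I → ℝ)
    (hrow1 : ∀ θ, ∑ S, d1 θ S = 0) (hrow2 : ∀ θ, ∑ S, d2 θ S = 0)
    (hsupp1 : ∀ θ S, d1 θ S ≠ 0 → φ θ S ∈ Set.Ioo (0:ℝ) 1)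
    (hsupp2 : ∀ θ S, d2 θ S ≠ 0 → φ θ S ∈ Set.Ioo (0:ℝ) 1)
    (θ1 : Θ) (S1 : I) (h11 : d1 θ1 S1 = 1)
    (θ0 : Θ) (S0 : I) (h10 : d1 θ0 S0 = 0) (h20 : d2 θ0 S0 = 1) : False := by
  set L1 := ∑ θ, ∑ S, μ θ * d1 θ S * r θ S with hL1def
  set L2 := ∑ θ, ∑ S, μ θ * d2 θ S * r θ S with hL2def
  by_cases hL1 : L1 = 0
  · have hz := perturb μ r C P hP φ hvertex d1 hrow1 hsupp1 hL1
    rw [hz θ1 S1] at h11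
    norm_num at h11
  · set d : Θ → I → ℝ := fun θ S => L2 * d1 θ S - L1 * d2 θ S with hd
    have hrow : ∀ θ, ∑ S, d θ S = 0 := by
      intro θ
      simp only [hd]
      rw [Finset.sum_sub_distrib, ← Finset.mul_sum, ← Finset.mul_sum, hrow1 θ, hrow2 θ]
      ring
    have hsupp : ∀ θ S, d θ S ≠ 0 → φ θ S ∈ Set.Ioo (0:ℝ) 1 := by
      intro θ S hne
      by_cases h1 : d1 θ S = 0
      · by_cases h2 : d2 θ S = 0
        · exact absurd (by simp [hd, h1, h2]) hne
        · exact hsupp2 θ S h2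
      · exact hsupp1 θ S h1
    have hLd : ∑ θ, ∑ S, μ θ * d θ S * r θ S = 0 := by
      have key : ∑ θ, ∑ S, μ θ * d θ S * r θ S = L2 * L1 - L1 * L2 := by
        rw [hL1def, hL2def, Finset.mul_sum, Finset.mul_sum, ← Finset.sum_sub_distrib]
        refine Finset.sum_congr rfl fun θ _ => ?_
        rw [Finset.mul_sum, Finset.mul_sum, ← Finset.sum_sub_distrib]
        refine Finset.sum_congr rfl fun S _ => ?_
        simp only [hd]
        ring
      rw [key]
      ring
    have hz := perturb μ r C P hP φ hvertex d hrow hsupp hLd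
    have := hz θ0 S0
    simp [hd, h10, h20] at this
    exact hL1 this

variable [DecidableEq Θ] [DecidableEq I]

private def dir (θa : Θ) (S1 S2 : I) : Θ → I → ℝ :=
  fun θ S => (if θ = θa ∧ S = S1 then 1 else 0) - (if θ = θa ∧ S = S2 then 1 else 0)

private lemma dir_row (θa : Θ) (S1 S2 : I) (θ : Θ) :
    ∑ S, dir θa S1 S2 θ S = 0 := by
  simp only [dir]
  rw [Finset.sum_sub_distrib]
  by_cases hθ : θ = θa <;> simp [hθ]

private lemma dir_supp (θa : Θ) (S1 S2 : I) (θ : Θ) (S : I)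
    (h : dir θa S1 S2 θ S ≠ 0) : θ = θa ∧ (S = S1 ∨ S = S2) := by
  by_contra hc
  push_neg at hc
  apply h
  simp only [dir]
  by_cases hθ : θ = θa
  · have := hc hθ
    simp [this.1, this.2]
  · simp [hθ]

private lemma dir_val1 (θa : Θ) {S1 S2 : I} (hS : S1 ≠ S2) :
    dir θa S1 S2 θa S1 = 1 := by simp [dir, hS]

private lemma dir_other_row (θa : Θ) (S1 S2 : I) {θ : Θ} (hθ : θ ≠ θa) (S : I) :
    dir θa S1 S2 θ S = 0 := by simp [dir, hθ]

private lemma dir_other (θa : Θ) (S1 S2 : I) {S : I} (h1 : S ≠ S1) (h2 : S ≠ S2) :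
    dir θa S1 S2 θa S = 0 := by simp [dir, h1, h2]

end Aux

open Finset in
/-- Structure lemma for vertices of the CCE-persuasiveness polytope: at any vertex,
at most one state has a non-0/1 distribution, and for that state at most two
coordinates lie strictly in (0,1), summing to 1. -/
theorem stmt_13 {Θ I : Type*} [Fintype Θ] [Fintype I] [DecidableEq Θ]
    (μ : Θ → ℝ) (hμpos : ∀ θ, 0 < μ θ) (hμsum : ∑ θ, μ θ = 1)
    (r : Θ → I → ℝ) (hr : ∀ θ S, 0 ≤ r θ S) (C : ℝ)
    (hC : ∀ T : I, ∑ θ, μ θ * r θ T ≤ C)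
    (P : Set (Θ → I → ℝ))
    (hP : P = {φ | (∀ θ S, 0 ≤ φ θ S) ∧ (∀ θ, ∑ S, φ θ S = 1) ∧
      C ≤ ∑ θ, ∑ S, μ θ * φ θ S * r θ S})
    (φ : Θ → I → ℝ) (hvertex : φ ∈ Set.extremePoints ℝ P) :
    ∃ θ' : Θ,
      (∀ θ, θ ≠ θ' → ∀ S, φ θ S = 0 ∨ φ θ S = 1) ∧
      (Finset.univ.filter (fun S : I => φ θ' S ∈ Set.Ioo (0 : ℝ) 1)).card ≤ 2 ∧
      (∀ S₁ S₂ : I, S₁ ≠ S₂ → φ θ' S₁ ∈ Set.Ioo (0 : ℝ) 1 →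
        φ θ' S₂ ∈ Set.Ioo (0 : ℝ) 1 → φ θ' S₁ + φ θ' S₂ = 1) := by
  classical
  have hφP := hvertex.1
  rw [hP] at hφP
  obtain ⟨hnn, hsum, hCC⟩ := hφP
  have hΘ : Nonempty Θ := by
    by_contra h
    rw [not_nonempty_iff] at h
    rw [Finset.univ_eq_empty, Finset.sum_empty] at hμsum
    norm_num at hμsum
  have hle1 : ∀ θ S, φ θ S ≤ 1 := fun θ S => by
    calc φ θ S ≤ ∑ S', φ θ S' :=
          Finset.single_le_sum (fun S' _ => hnn θ S') (mem_univ S)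
      _ = 1 := hsum θ
  have hnotfrac : ∀ θ S, φ θ S ∉ Set.Ioo (0:ℝ) 1 → φ θ S = 0 ∨ φ θ S = 1 := by
    intro θ S h
    rw [Set.mem_Ioo] at h
    push_neg at h
    rcases (hnn θ S).lt_or_eq with h0 | h0
    · right; exact le_antisymm (hle1 θ S) (h h0)
    · left; exact h0.symm
  -- any row with a fractional entry has a second fractional entry
  have hpair : ∀ θ S, φ θ S ∈ Set.Ioo (0:ℝ) 1 →
      ∃ S', S' ≠ S ∧ φ θ S' ∈ Set.Ioo (0:ℝ) 1 := by
    intro θ S hS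
    by_contra h
    push_neg at h
    have hz : ∀ S', S' ≠ S → φ θ S' = 0 := by
      intro S' hS'
      rcases hnotfrac θ S' (h S' hS') with h0 | h1
      · exact h0
      · exfalso
        have hle : φ θ S + φ θ S' ≤ ∑ S'', φ θ S'' := by
          rw [← Finset.sum_pair (Ne.symm hS')]
          exact Finset.sum_le_sum_of_subset_of_nonneg (subset_univ _)
            (fun i _ _ => hnn θ i)
        rw [hsum θ, h1] at hle
        linarith [hS.1]
    have h1 : ∑ S'', φ θ S'' = φ θ S :=
      Finset.sum_eq_single S (fun b _ hb => hz b hb)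
        (fun h' => absurd (mem_univ S) h')
    rw [hsum θ] at h1
    exact absurd h1.symm (ne_of_lt hS.2)
  -- Claim A: two distinct fractional rows are impossible
  have claimA : ∀ θa θb, θa ≠ θb →
      ∀ Sa, φ θa Sa ∈ Set.Ioo (0:ℝ) 1 → ∀ Sb, φ θb Sb ∈ Set.Ioo (0:ℝ) 1 → False := by
    intro θa θb hab Sa ha Sb hb
    obtain ⟨Sa', haa, ha'⟩ := hpair θa Sa ha
    obtain ⟨Sb', hbb, hb'⟩ := hpair θb Sb hb
    refine no_two_dirs μ r C P hP φ hvertex (dir θa Sa Sa') (dir θb Sb Sb')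
      (dir_row θa Sa Sa') (dir_row θb Sb Sb') ?_ ?_
      θa Sa (dir_val1 θa (Ne.symm haa)) θb Sb
      (dir_other_row θa Sa Sa' (Ne.symm hab) Sb) (dir_val1 θb (Ne.symm hbb))
    · intro θ S h
      obtain ⟨hθ, hS⟩ := dir_supp θa Sa Sa' θ S h
      subst hθ
      rcases hS with rfl | rfl
      · exact ha
      · exact ha'
    · intro θ S h
      obtain ⟨hθ, hS⟩ := dir_supp θb Sb Sb' θ S h
      subst hθ
      rcases hS with rfl | rfl
      · exact hb
      · exact hb'
  -- Claim B: no row has three distinct fractional entries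
  have claimB : ∀ θ' S1 S2 S3, S1 ≠ S2 → S1 ≠ S3 → S2 ≠ S3 →
      φ θ' S1 ∈ Set.Ioo (0:ℝ) 1 → φ θ' S2 ∈ Set.Ioo (0:ℝ) 1 →
      φ θ' S3 ∈ Set.Ioo (0:ℝ) 1 → False := by
    intro θ' S1 S2 S3 h12 h13 h23 hf1 hf2 hf3
    refine no_two_dirs μ r C P hP φ hvertex (dir θ' S1 S3) (dir θ' S2 S3)
      (dir_row θ' S1 S3) (dir_row θ' S2 S3) ?_ ?_
      θ' S1 (dir_val1 θ' h13) θ' S2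
      (dir_other θ' S1 S3 (Ne.symm h12) h23) (dir_val1 θ' h23)
    · intro θ S h
      obtain ⟨hθ, hS⟩ := dir_supp θ' S1 S3 θ S h
      subst hθ
      rcases hS with rfl | rfl
      · exact hf1
      · exact hf3
    · intro θ S h
      obtain ⟨hθ, hS⟩ := dir_supp θ' S2 S3 θ S h
      subst hθ
      rcases hS with rfl | rfl
      · exact hf2
      · exact hf3
  by_cases hex : ∃ θ S, φ θ S ∈ Set.Ioo (0:ℝ) 1
  · obtain ⟨θ', Sf, hSf⟩ := hex
    refine ⟨θ', ?_, ?_, ?_⟩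
    · intro θ hθ S
      refine hnotfrac θ S fun hfr => ?_
      exact claimA θ θ' hθ S hfr Sf hSf
    · by_contra hcard
      push_neg at hcard
      obtain ⟨a, b, c, ha, hb, hc, hab, hac, hbc⟩ :=
        Finset.two_lt_card_iff.mp hcard
      rw [mem_filter] at ha hb hc
      exact claimB θ' a b c hab hac hbc ha.2 hb.2 hc.2
    · intro S₁ S₂ hne h1 h2
      have hz : ∀ S, S ∉ ({S₁, S₂} : Finset I) → φ θ' S = 0 := by
        intro S hS
        rw [Finset.mem_insert, Finset.mem_singleton] at hS
        push_neg at hS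
        have hnf : φ θ' S ∉ Set.Ioo (0:ℝ) 1 := fun hfr =>
          claimB θ' S₁ S₂ S hne (Ne.symm hS.1) (Ne.symm hS.2) h1 h2 hfr
        rcases hnotfrac θ' S hnf with h0 | hone
        · exact h0
        · exfalso
          have hsub : ({S₁, S₂, S} : Finset I) ⊆ univ := subset_univ _
          have hcard3 : ∑ x ∈ ({S₁, S₂, S} : Finset I), φ θ' x
              = φ θ' S₁ + φ θ' S₂ + φ θ' S := by
            rw [Finset.sum_insert (by simp [hne, Ne.symm hS.1]),
                Finset.sum_insert (by simp [Ne.symm hS.2]),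
                Finset.sum_singleton]
            ring
          have hle : ∑ x ∈ ({S₁, S₂, S} : Finset I), φ θ' x ≤ ∑ x, φ θ' x :=
            Finset.sum_le_sum_of_subset_of_nonneg hsub (fun i _ _ => hnn θ' i)
          rw [hcard3, hsum θ', hone] at hle
          linarith [h1.1, h2.1]
      have hkey : ∑ S, φ θ' S = ∑ S ∈ ({S₁, S₂} : Finset I), φ θ' S :=
        (Finset.sum_subset (subset_univ _) (fun x _ hx => hz x hx)).symm
      rw [hsum θ', Finset.sum_pair hne] at hkey
      linarith
  · push_neg at hex
    obtain ⟨θ'⟩ := hΘ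
    refine ⟨θ', fun θ _ S => hnotfrac θ S (hex θ S), ?_,
      fun S₁ S₂ _ hf _ => absurd hf (hex θ' S₁)⟩
    have : (Finset.univ.filter (fun S : I => φ θ' S ∈ Set.Ioo (0 : ℝ) 1)) = ∅ := by
      rw [Finset.filter_eq_empty_iff]
      intro S _
      exact hex θ' S
    rw [this]
    norm_num
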